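/- Let W be an oriented 3-dimensional real inner product space with Hodge star *₃ and the metric tensor g ∈ W⊗W. Then for f ∈ ℝ and σ ∈ W, the tensor μ(f,σ) = (f²-|σ|²)g - 2*₃(fσ) + σ⊗σ vanishes if and only if f = 0 and σ = 0. -/
import Mathlib


open Matrix

/- STATEMENT 16: In an oriented 3-dimensional inner product space W (model ℝ³, with
eᵢ = Pi.single i 1, metric tensor g = δᵢⱼ, and *₃(fσ) the antisymmetric tensor with
components f⟨σ, eᵢ × eⱼ⟩), the tensor μ(f,σ) = (f²-|σ|²)g - 2*₃(fσ) + σ⊗σ vanishes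
if and only if f = 0 and σ = 0. -/
theorem stmt_16 (f : ℝ) (σ : Fin 3 → ℝ) :
    (∀ i j : Fin 3,
      (f ^ 2 - σ ⬝ᵥ σ) * (if i = j then (1 : ℝ) else 0)
        - 2 * (f * (σ ⬝ᵥ crossProduct (Pi.single i 1) (Pi.single j 1)))
        + σ i * σ j = 0) ↔ (f = 0 ∧ σ = 0) := by
  constructor
  · intro h
    have h00 := h 0 0
    have h11 := h 1 1
    have h22 := h 2 2
    have h01 := h 0 1
    have h12 := h 1 2
    have h20 := h 2 0
    simp [crossProduct, dotProduct, Fin.sum_univ_three, Pi.single_apply] at h00 h11 h22 h01 h12 h20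
    have hS : σ 0 ^ 2 + σ 1 ^ 2 + σ 2 ^ 2 = 3 / 2 * f ^ 2 := by nlinarith
    have ha : σ 0 * σ 1 = 2 * f * σ 2 := by linarith
    have hb : σ 1 * σ 2 = 2 * f * σ 0 := by linarith
    have hc : σ 2 * σ 0 = 2 * f * σ 1 := by linarith
    have ha2 : (σ 0 * σ 1) ^ 2 = (2 * f * σ 2) ^ 2 := by rw [ha]
    have hb2 : (σ 1 * σ 2) ^ 2 = (2 * f * σ 0) ^ 2 := by rw [hb]
    have hc2 : (σ 2 * σ 0) ^ 2 = (2 * f * σ 1) ^ 2 := by rw [hc]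
    have hS2 : (σ 0 ^ 2 + σ 1 ^ 2 + σ 2 ^ 2) ^ 2 = (3 / 2 * f ^ 2) ^ 2 := by rw [hS]
    have hf4 : f ^ 4 ≤ 0 := by
      nlinarith [sq_nonneg (σ 0 ^ 2 - σ 1 ^ 2), sq_nonneg (σ 1 ^ 2 - σ 2 ^ 2),
        sq_nonneg (σ 2 ^ 2 - σ 0 ^ 2), hS2, ha2, hb2, hc2, sq_nonneg f, hS,
        mul_self_nonneg (f ^ 2)]
    have hf : f = 0 := by
      have : f ^ 4 = 0 := le_antisymm hf4 (by positivity)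
      exact pow_eq_zero_iff (by norm_num) |>.mp this
    subst hf
    norm_num at h00 h11 h22
    have h0 : σ 0 = 0 := mul_self_eq_zero.mp (by
      linarith [mul_self_nonneg (σ 0), mul_self_nonneg (σ 1), mul_self_nonneg (σ 2)])
    have h1 : σ 1 = 0 := mul_self_eq_zero.mp (by
      linarith [mul_self_nonneg (σ 0), mul_self_nonneg (σ 1), mul_self_nonneg (σ 2)])
    have h2 : σ 2 = 0 := mul_self_eq_zero.mp (by
      linarith [mul_self_nonneg (σ 0), mul_self_nonneg (σ 1), mul_self_nonneg (σ 2)])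
    exact ⟨rfl, funext fun i => by fin_cases i <;> assumption⟩
  · rintro ⟨rfl, rfl⟩
    intro i j
    simp [dotProduct]
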